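/- Let B be an m×n real matrix and a ∈ ℝ^m. Set k = n − rank(B), suppose the vectors x⁽¹⁾,…,x⁽ᵏ⁾ ∈ ℝⁿ form a basis of the kernel {x ∈ ℝⁿ : Bx = 0}, and suppose y ∈ ℝⁿ satisfies By = a. Let g : (ℝ₊)ⁿ → ℝ₊ (positive reals) satisfy the scaling invariance: for all s = (s₁,…,s_m) with sⱼ > 0 and all W = (W₁,…,Wₙ) with Wᵢ > 0, g(W₁·∏ⱼ sⱼ^{B_{j1}}, …, Wₙ·∏ⱼ sⱼ^{B_{jn}}) = (∏ⱼ sⱼ^{aⱼ}) · g(W). Then there exists a function F : (ℝ₊)ᵏ → ℝ₊ such that for all W, g(W) · W₁^{−y₁} ⋯ Wₙ^{−yₙ} = F(π₁,…,π_k), where πᵢ = W₁^{x_{1i}} ⋯ Wₙ^{x_{ni}} and x⁽ⁱ⁾ = (x_{1i},…,x_{ni}). -/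

import Mathlib

open Matrix

lemma row_space_of_ker_perp (m n : ℕ) (B : Matrix (Fin m) (Fin n) ℝ) (z : Fin n → ℝ)
    (hz : ∀ v, B.mulVec v = 0 → z ⬝ᵥ v = 0) : ∃ t : Fin m → ℝ, z = B.vecMul t := by
  classical
  let L : Fin m → (Fin n → ℝ) →ₗ[ℝ] ℝ := fun j => (LinearMap.proj j).comp B.mulVecLin
  let K : (Fin n → ℝ) →ₗ[ℝ] ℝ :=
    { toFun := fun v => z ⬝ᵥ v,
      map_add' := fun x y => dotProduct_add z x y,
      map_smul' := fun c x => dotProduct_smul c z x }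
  have hker : ⨅ j, LinearMap.ker (L j) ≤ LinearMap.ker K := by
    intro v hv
    simp only [Submodule.mem_iInf, LinearMap.mem_ker, LinearMap.comp_apply,
      LinearMap.proj_apply, mulVecLin_apply, L] at hv
    exact hz v (funext hv)
  have hspan := mem_span_of_iInf_ker_le_ker hker
  obtain ⟨c, hc⟩ := (Submodule.mem_span_range_iff_exists_fun ℝ).1 hspan
  refine ⟨c, dotProduct_eq _ _ fun v => ?_⟩
  have hcv := LinearMap.congr_fun hc v
  simp only [LinearMap.coe_sum, Finset.sum_apply, LinearMap.smul_apply, LinearMap.comp_apply,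
    LinearMap.proj_apply, mulVecLin_apply, smul_eq_mul, L, K, LinearMap.coe_mk,
    AddHom.coe_mk] at hcv
  rw [← dotProduct_mulVec]
  exact hcv.symm

lemma pi_theorem_eq (m n : ℕ) (B : Matrix (Fin m) (Fin n) ℝ) (a : Fin m → ℝ)
    (xs : Fin (n - B.rank) → (Fin n → ℝ))
    (hxs_span : Submodule.span ℝ (Set.range xs) = LinearMap.ker B.mulVecLin)
    (y : Fin n → ℝ) (hy : B.mulVec y = a)
    (g : (Fin n → ℝ) → ℝ)
    (hg_inv : ∀ (s : Fin m → ℝ) (W : Fin n → ℝ), (∀ j, 0 < s j) → (∀ i, 0 < W i) →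
      g (fun i => W i * ∏ j, s j ^ B j i) = (∏ j, s j ^ a j) * g W)
    (W W' : Fin n → ℝ) (hW : ∀ i, 0 < W i) (hW' : ∀ i, 0 < W' i)
    (hπ : ∀ i, ∏ j, W j ^ xs i j = ∏ j, W' j ^ xs i j) :
    g W * ∏ i, W i ^ (-(y i)) = g W' * ∏ i, W' i ^ (-(y i)) := by
  classical
  set u : Fin n → ℝ := fun i => Real.log (W' i) - Real.log (W i) with hu_def
  -- u is orthogonal to the kernel of B
  have hu : ∀ v, B.mulVec v = 0 → u ⬝ᵥ v = 0 := by
    let D : (Fin n → ℝ) →ₗ[ℝ] ℝ :=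
      { toFun := fun v => u ⬝ᵥ v,
        map_add' := fun x y => dotProduct_add u x y,
        map_smul' := fun c x => dotProduct_smul c u x }
    have hle : Submodule.span ℝ (Set.range xs) ≤ LinearMap.ker D := by
      rw [Submodule.span_le]
      rintro _ ⟨i, rfl⟩
      have hlog := congrArg Real.log (hπ i)
      rw [Real.log_prod (fun j _ => (Real.rpow_pos_of_pos (hW j) _).ne'),
        Real.log_prod (fun j _ => (Real.rpow_pos_of_pos (hW' j) _).ne')] at hlog
      rw [Finset.sum_congr rfl (fun j _ => Real.log_rpow (hW j) (xs i j)),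
        Finset.sum_congr rfl (fun j _ => Real.log_rpow (hW' j) (xs i j))] at hlog
      simp only [SetLike.mem_coe, LinearMap.mem_ker, LinearMap.coe_mk, AddHom.coe_mk, D,
        dotProduct, hu_def]
      have : ∑ j, (Real.log (W' j) - Real.log (W j)) * xs i j
          = ∑ j, xs i j * Real.log (W' j) - ∑ j, xs i j * Real.log (W j) := by
        rw [← Finset.sum_sub_distrib]; congr 1; ext j; ring
      rw [this, ← hlog, sub_self]
    intro v hv
    have hvmem : v ∈ Submodule.span ℝ (Set.range xs) := by
      rw [hxs_span]; exact hv
    exact hle hvmem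
  obtain ⟨t, ht⟩ := row_space_of_ker_perp m n B u hu
  set s : Fin m → ℝ := fun j => Real.exp (t j) with hs_def
  have hs : ∀ j, 0 < s j := fun j => Real.exp_pos _
  have hexp : ∀ (b : Fin m → ℝ), ∏ j, s j ^ b j = Real.exp (∑ j, t j * b j) := by
    intro b
    have h1 : ∏ j, s j ^ b j = ∏ j, Real.exp (t j * b j) :=
      Finset.prod_congr rfl fun j _ => by
        rw [hs_def, Real.rpow_def_of_pos (Real.exp_pos _), Real.log_exp]
    rw [h1, Real.exp_sum]
  have huvec : ∀ i, u i = ∑ j, t j * B j i := fun i => by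
    rw [ht]; rfl
  have hexpu : ∀ i, Real.exp (u i) = W' i / W i := fun i => by
    rw [hu_def, Real.exp_sub, Real.exp_log (hW' i), Real.exp_log (hW i)]
  have hW'eq : W' = fun i => W i * ∏ j, s j ^ B j i := by
    funext i
    rw [hexp (fun j => B j i), ← huvec i, hexpu i, mul_comm, div_mul_cancel₀ _ (hW i).ne']
  have hgW' : g W' = Real.exp (u ⬝ᵥ y) * g W := by
    have := hg_inv s W hs hW
    rw [← hW'eq] at this
    rw [this, hexp a]
    congr 1
    congr 1
    have h1 : ∑ j, t j * a j = t ⬝ᵥ a := rfl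
    rw [h1, ← hy, dotProduct_mulVec, ← ht]
  have hprod : ∏ i, W' i ^ (-(y i)) = Real.exp (-(u ⬝ᵥ y)) * ∏ i, W i ^ (-(y i)) := by
    have : ∀ i, W' i ^ (-(y i)) = Real.exp (u i * (-(y i))) * W i ^ (-(y i)) := by
      intro i
      rw [hW'eq]
      dsimp only
      rw [hexp (fun j => B j i), ← huvec i,
        Real.mul_rpow (hW i).le (Real.exp_pos _).le, ← Real.exp_mul, mul_comm]
    rw [Finset.prod_congr rfl fun i _ => this i, Finset.prod_mul_distrib, ← Real.exp_sum]
    congr 2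
    simp [dotProduct, mul_neg]
  rw [hgW', hprod]
  have : Real.exp (u ⬝ᵥ y) * g W * (Real.exp (-(u ⬝ᵥ y)) * ∏ i, W i ^ (-(y i)))
      = (Real.exp (u ⬝ᵥ y) * Real.exp (-(u ⬝ᵥ y))) * (g W * ∏ i, W i ^ (-(y i))) := by ring
  rw [this, ← Real.exp_add, add_neg_cancel, Real.exp_zero, one_mul]

theorem pi_theorem (m n : ℕ) (B : Matrix (Fin m) (Fin n) ℝ) (a : Fin m → ℝ)
    (xs : Fin (n - B.rank) → (Fin n → ℝ))
    (hxs_indep : LinearIndependent ℝ xs)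
    (hxs_span : Submodule.span ℝ (Set.range xs) = LinearMap.ker B.mulVecLin)
    (y : Fin n → ℝ) (hy : B.mulVec y = a)
    (g : (Fin n → ℝ) → ℝ)
    (hg_pos : ∀ W : Fin n → ℝ, (∀ i, 0 < W i) → 0 < g W)
    (hg_inv : ∀ (s : Fin m → ℝ) (W : Fin n → ℝ), (∀ j, 0 < s j) → (∀ i, 0 < W i) →
      g (fun i => W i * ∏ j, s j ^ B j i) = (∏ j, s j ^ a j) * g W) :
    ∃ F : (Fin (n - B.rank) → ℝ) → ℝ,
      ∀ W : Fin n → ℝ, (∀ i, 0 < W i) →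
        g W * ∏ i, W i ^ (-(y i)) = F (fun i => ∏ j, W j ^ xs i j) := by
  classical
  refine ⟨fun p => if h : ∃ W : Fin n → ℝ, (∀ i, 0 < W i) ∧
      (fun i => ∏ j, W j ^ xs i j) = p
    then g h.choose * ∏ i, h.choose i ^ (-(y i)) else 0, ?_⟩
  intro W hW
  have hex : ∃ W' : Fin n → ℝ, (∀ i, 0 < W' i) ∧
      (fun i => ∏ j, W' j ^ xs i j) = (fun i => ∏ j, W j ^ xs i j) := ⟨W, hW, rfl⟩
  dsimp only
  rw [dif_pos hex]
  obtain ⟨hpos, hπ⟩ := hex.choose_spec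
  exact pi_theorem_eq m n B a xs hxs_span y hy g hg_inv W hex.choose hW hpos
    (fun i => (congrFun hπ i).symm)
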